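/- Let Ω be a finite probability space, let G be a discrete random variable with values in a finite type, let G_S* = φ*(G) for a deterministic map φ*, let f be a deterministic real-valued map on the codomain of φ*, and let ε be a real-valued random variable independent of G. If Y = f(G_S*) + ε, then the conditional mutual information I(G ; Y | G_S*) = 0, i.e., G and Y are conditionally independent given G_S*. -/

import Mathlib

open Finset

variable {Ω : Type*} [Fintype Ω]

/-- The probability mass function of a random variable `X : Ω → α` on a finite sample
space `Ω` weighted by `μ`. -/
noncomputable def pmfOf {α : Type*} [DecidableEq α] (μ : Ω → ℝ) (X : Ω → α) (a : α) : ℝ :=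
  ∑ ω, if X ω = a then μ ω else 0

/-- `μ` is a probability mass function on the finite sample space `Ω`. -/
def IsPMF (μ : Ω → ℝ) : Prop := (∀ ω, 0 ≤ μ ω) ∧ ∑ ω, μ ω = 1

/-- Shannon entropy (natural logarithm) of a discrete random variable `X`:
`H(X) = -∑_a P(X = a) log P(X = a)`, written as a sum over the sample space. -/
noncomputable def entropy {α : Type*} [DecidableEq α] (μ : Ω → ℝ) (X : Ω → α) : ℝ :=
  -∑ ω, μ ω * Real.log (pmfOf μ X (X ω))

/-- Shannon mutual information `I(X ; Y) = H(X) + H(Y) - H(X, Y)`. -/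
noncomputable def mutualInfo {α β : Type*} [DecidableEq α] [DecidableEq β]
    (μ : Ω → ℝ) (X : Ω → α) (Y : Ω → β) : ℝ :=
  entropy μ X + entropy μ Y - entropy μ (fun ω => (X ω, Y ω))

/-- Conditional mutual information
`I(X ; Z ∣ W) = H(X, W) + H(Z, W) - H(X, Z, W) - H(W)`. -/
noncomputable def condMutualInfo {α β γ : Type*} [DecidableEq α] [DecidableEq β] [DecidableEq γ]
    (μ : Ω → ℝ) (X : Ω → α) (Z : Ω → β) (W : Ω → γ) : ℝ :=
  entropy μ (fun ω => (X ω, W ω)) + entropy μ (fun ω => (Z ω, W ω))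
    - entropy μ (fun ω => (X ω, Z ω, W ω)) - entropy μ W

/-- Independence of two discrete random variables: the joint pmf factors as the product
of the marginal pmfs. -/
def Indep {α β : Type*} [DecidableEq α] [DecidableEq β]
    (μ : Ω → ℝ) (X : Ω → α) (Y : Ω → β) : Prop :=
  ∀ a b, pmfOf μ (fun ω => (X ω, Y ω)) (a, b) = pmfOf μ X a * pmfOf μ Y b

lemma pmfOf_comp_inj {α β : Type*} [DecidableEq α] [DecidableEq β]
    (μ : Ω → ℝ) (X : Ω → α) (e : α → β) (he : Function.Injective e) (ω : Ω) :
    pmfOf μ (fun ω' => e (X ω')) (e (X ω)) = pmfOf μ X (X ω) := by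
  unfold pmfOf
  exact Finset.sum_congr rfl fun ω' _ => by simp [he.eq_iff]

lemma entropy_comp_inj {α β : Type*} [DecidableEq α] [DecidableEq β]
    (μ : Ω → ℝ) (X : Ω → α) (e : α → β) (he : Function.Injective e) :
    entropy μ (fun ω' => e (X ω')) = entropy μ X := by
  unfold entropy
  congr 1
  exact Finset.sum_congr rfl fun ω _ => by rw [pmfOf_comp_inj μ X e he ω]

lemma le_pmfOf {α : Type*} [DecidableEq α]
    (μ : Ω → ℝ) (h0 : ∀ ω, 0 ≤ μ ω) (X : Ω → α) (ω : Ω) :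
    μ ω ≤ pmfOf μ X (X ω) := by
  unfold pmfOf
  have := Finset.single_le_sum (f := fun ω' => if X ω' = X ω then μ ω' else 0)
    (fun i _ => by split_ifs; exacts [h0 i, le_rfl]) (Finset.mem_univ ω)
  simpa using this

lemma entropy_pair_of_indep {α β : Type*} [DecidableEq α] [DecidableEq β]
    (μ : Ω → ℝ) (h0 : ∀ ω, 0 ≤ μ ω) (X : Ω → α) (Y : Ω → β) (h : Indep μ X Y) :
    entropy μ (fun ω => (X ω, Y ω)) = entropy μ X + entropy μ Y := by
  unfold entropy
  rw [← neg_add, ← Finset.sum_add_distrib]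
  congr 1
  refine Finset.sum_congr rfl fun ω _ => ?_
  rcases eq_or_lt_of_le (h0 ω) with h'|h'
  · simp [← h']
  · have hx : pmfOf μ X (X ω) ≠ 0 := ne_of_gt (lt_of_lt_of_le h' (le_pmfOf μ h0 X ω))
    have hy : pmfOf μ Y (Y ω) ≠ 0 := ne_of_gt (lt_of_lt_of_le h' (le_pmfOf μ h0 Y ω))
    rw [h (X ω) (Y ω), Real.log_mul hx hy, mul_add]

lemma indep_comp_right {𝒢 𝒮 : Type*} [Fintype 𝒢] [DecidableEq 𝒢] [DecidableEq 𝒮]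
    (μ : Ω → ℝ) (ε : Ω → ℝ) (G : Ω → 𝒢) (φ : 𝒢 → 𝒮) (h : Indep μ ε G) :
    Indep μ ε (fun ω => φ (G ω)) := by
  intro e s
  have key : ∀ (Z : Ω → ℝ × 𝒢) (c : ℝ),
      (∑ a with φ a = s, ∑ ω, if Z ω = (c, a) then μ ω else 0)
        = ∑ ω, if (Prod.fst (Z ω) = c ∧ φ (Prod.snd (Z ω)) = s) then μ ω else 0 := by
    intro Z c
    rw [Finset.sum_comm]
    refine Finset.sum_congr rfl fun ω _ => ?_
    rw [Finset.sum_filter]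
    rw [Finset.sum_eq_single (Z ω).2]
    · simp [Prod.ext_iff, and_comm, ite_and]
    · intro b _ hb
      simp [Prod.ext_iff]
      intro _ _ h2
      exact absurd h2.symm hb
    · simp
  have h1 : pmfOf μ (fun ω => (ε ω, φ (G ω))) (e, s)
      = ∑ a with φ a = s, pmfOf μ (fun ω => (ε ω, G ω)) (e, a) := by
    unfold pmfOf
    rw [key (fun ω => (ε ω, G ω)) e]
    exact Finset.sum_congr rfl fun ω _ => by simp [Prod.ext_iff]
  have h2 : pmfOf μ (fun ω => φ (G ω)) s = ∑ a with φ a = s, pmfOf μ G a := by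
    unfold pmfOf
    rw [Finset.sum_comm]
    refine Finset.sum_congr rfl fun ω _ => ?_
    rw [Finset.sum_filter, Finset.sum_eq_single (G ω)] <;> simp
    tauto
  rw [h1, h2, Finset.mul_sum]
  exact Finset.sum_congr rfl fun a _ => h e a

/-- If `Y = f(G_S*) + ε` where `G_S* = φ*(G)` and `ε` is independent of `G`, then
`I(G ; Y ∣ G_S*) = 0`, i.e. `G` and `Y` are conditionally independent given `G_S*`. -/
theorem condMutualInfo_G_Y_eq_zero
    {𝒢 𝒮 : Type*} [Fintype 𝒢] [Fintype 𝒮] [DecidableEq 𝒢] [DecidableEq 𝒮]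
    (μ : Ω → ℝ) (hμ : IsPMF μ)
    (G : Ω → 𝒢) (φStar : 𝒢 → 𝒮) (f : 𝒮 → ℝ) (ε Y : Ω → ℝ)
    (hY : ∀ ω, Y ω = f (φStar (G ω)) + ε ω)
    (hIndep : Indep μ ε G) :
    condMutualInfo μ G Y (fun ω => φStar (G ω)) = 0 := by
  obtain ⟨h0, -⟩ := hμ
  have e1 : entropy μ (fun ω => (G ω, φStar (G ω))) = entropy μ G :=
    entropy_comp_inj μ G (fun a => (a, φStar a)) (fun a b h => congrArg Prod.fst h)
  have e2 : entropy μ (fun ω => (Y ω, φStar (G ω)))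
      = entropy μ (fun ω => (ε ω, φStar (G ω))) := by
    have hinj : Function.Injective (fun p : ℝ × 𝒮 => (f p.2 + p.1, p.2)) := by
      intro p q hpq
      simp only [Prod.mk.injEq] at hpq
      obtain ⟨h1, h2⟩ := hpq
      rw [h2] at h1
      exact Prod.ext (by linarith) h2
    have := entropy_comp_inj μ (fun ω => (ε ω, φStar (G ω))) _ hinj
    rw [← this]
    congr 1
    funext ω
    simp [hY ω]
  have e3 : entropy μ (fun ω => (G ω, Y ω, φStar (G ω)))
      = entropy μ (fun ω => (G ω, ε ω)) := by
    have hinj : Function.Injective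
        (fun p : 𝒢 × ℝ => (p.1, f (φStar p.1) + p.2, φStar p.1)) := by
      intro p q hpq
      simp only [Prod.mk.injEq] at hpq
      obtain ⟨h1, h2, -⟩ := hpq
      rw [h1] at h2
      exact Prod.ext h1 (by linarith)
    have := entropy_comp_inj μ (fun ω => (G ω, ε ω)) _ hinj
    rw [← this]
    congr 1
    funext ω
    simp [hY ω]
  have e4 : entropy μ (fun ω => (ε ω, φStar (G ω)))
      = entropy μ ε + entropy μ (fun ω => φStar (G ω)) :=
    entropy_pair_of_indep μ h0 _ _ (indep_comp_right μ ε G φStar hIndep)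
  have e5 : entropy μ (fun ω => (G ω, ε ω)) = entropy μ ε + entropy μ G := by
    have hinj : Function.Injective (fun p : ℝ × 𝒢 => (p.2, p.1)) := by
      intro p q hpq
      exact Prod.ext (congrArg Prod.snd hpq) (congrArg Prod.fst hpq)
    have h := entropy_comp_inj μ (fun ω => (ε ω, G ω)) _ hinj
    have h2 := entropy_pair_of_indep μ h0 _ _ hIndep
    rw [← h2, ← h]
  unfold condMutualInfo
  rw [e1, e2, e3, e4, e5]
  ring
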